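/- Let μ and ν be probability measures on ℝ^d both satisfying the tail bound P(‖X‖ ≥ z) ≤ e^{−z/C + 1} for z ≥ C, where C > 0. Then for any R ≥ C, W₂²(μ, ν) ≤ 4R² ‖μ − ν‖_TV + 8(R² + RC + C²) e^{−R/C + 1}. -/

import Mathlib

set_option maxHeartbeats 1000000

open MeasureTheory

/-- Total variation distance between two measures: supremum over measurable sets. -/
noncomputable def tvDist {α : Type*} [MeasurableSpace α] (μ ν : Measure α) : ℝ :=
  ⨆ S : {S : Set α // MeasurableSet S}, |(μ S.1).toReal - (ν S.1).toReal|

/-- Squared 2-Wasserstein distance: infimum over couplings of the expected squared distance. -/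
noncomputable def W2sq {α : Type*} [MeasurableSpace α] [NormedAddCommGroup α]
    (μ ν : Measure α) : ℝ :=
  sInf {c : ℝ | ∃ γ : Measure (α × α), γ.map Prod.fst = μ ∧ γ.map Prod.snd = ν ∧
    c = ∫ p, ‖p.1 - p.2‖ ^ 2 ∂γ}

section Aux

open Real Set Filter Topology

lemma aux_texp_deriv (C : ℝ) (hC : 0 < C) (t : ℝ) :
    HasDerivAt (fun t : ℝ => -(C * ((t + C) * Real.exp (1 - t / C))))
      (t * Real.exp (1 - t / C)) t := by
  have h1 : HasDerivAt (fun t : ℝ => 1 - t / C) (-(1 / C)) t := by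
    simpa using ((hasDerivAt_id t).div_const C).const_sub 1
  have h2 : HasDerivAt (fun t : ℝ => Real.exp (1 - t / C)) (Real.exp (1 - t / C) * (-(1 / C))) t :=
    (Real.hasDerivAt_exp _).comp t h1
  have h3 : HasDerivAt (fun t : ℝ => (t + C) * Real.exp (1 - t / C))
      (1 * Real.exp (1 - t / C) + (t + C) * (Real.exp (1 - t / C) * (-(1 / C)))) t :=
    ((hasDerivAt_id t).add_const C).mul h2
  have := (h3.const_mul C).neg
  have e : C * (1 / C) = 1 := mul_one_div_cancel hC.ne'
  exact this.congr_deriv (by linear_combination ((t + C) * Real.exp (1 - t / C)) * e)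

lemma aux_texp_tendsto (C : ℝ) (hC : 0 < C) :
    Tendsto (fun t : ℝ => -(C * ((t + C) * Real.exp (1 - t / C)))) atTop (𝓝 0) := by
  have hb : 0 < 1 / C := by positivity
  have h1 : Tendsto (fun t : ℝ => t * Real.exp (-(1/C) * t)) atTop (𝓝 0) := by
    have := tendsto_rpow_mul_exp_neg_mul_atTop_nhds_zero 1 (1/C) hb
    refine this.congr' ?_
    filter_upwards [eventually_gt_atTop (0:ℝ)] with x hx
    rw [Real.rpow_one]
  have h0 : Tendsto (fun t : ℝ => Real.exp (-(1/C) * t)) atTop (𝓝 0) := by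
    have := tendsto_rpow_mul_exp_neg_mul_atTop_nhds_zero 0 (1/C) hb
    refine this.congr' ?_
    filter_upwards [eventually_gt_atTop (0:ℝ)] with x hx
    rw [Real.rpow_zero, one_mul]
  have key : Tendsto (fun t : ℝ => (t + C) * Real.exp (1 - t / C)) atTop (𝓝 0) := by
    have : (fun t : ℝ => (t + C) * Real.exp (1 - t / C))
        = fun t : ℝ => Real.exp 1 * (t * Real.exp (-(1/C) * t))
          + (C * Real.exp 1) * Real.exp (-(1/C) * t) := by
      funext t
      rw [show (1 - t / C) = 1 + (-(1/C) * t) by ring, Real.exp_add]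
      ring
    rw [this]
    simpa using ((h1.const_mul (Real.exp 1)).add (h0.const_mul (C * Real.exp 1)))
  simpa using (key.const_mul C).neg

lemma aux_texp_integrable (C R : ℝ) (hC : 0 < C) (hR : 0 < R) :
    IntegrableOn (fun t : ℝ => t * Real.exp (1 - t / C)) (Set.Ioi R) := by
  refine integrableOn_Ioi_deriv_of_nonneg' (g := fun t => -(C * ((t + C) * Real.exp (1 - t / C))))
    (fun x _ => aux_texp_deriv C hC x) (fun x hx => ?_) (aux_texp_tendsto C hC)
  have : (0:ℝ) < x := lt_trans hR hx
  positivity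

lemma aux_texp_integral (C R : ℝ) (hC : 0 < C) (hR : 0 < R) :
    ∫ t in Set.Ioi R, t * Real.exp (1 - t / C) = C * (R + C) * Real.exp (1 - R / C) := by
  rw [integral_Ioi_of_hasDerivAt_of_nonneg' (fun x _ => aux_texp_deriv C hC x)
    (fun x hx => by have : (0:ℝ) < x := lt_trans hR hx; positivity) (aux_texp_tendsto C hC)]
  ring

lemma aux_tail_moment {α : Type*} [MeasurableSpace α] [NormedAddCommGroup α]
    [OpensMeasurableSpace α] (μ : Measure α) [IsProbabilityMeasure μ]
    (C R : ℝ) (hC : 0 < C) (hR : C ≤ R)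
    (htail : ∀ z : ℝ, C ≤ z → (μ {x | z ≤ ‖x‖}).toReal ≤ Real.exp (-z / C + 1)) :
    ∫⁻ x in {x | R ≤ ‖x‖}, ENNReal.ofReal (‖x‖ ^ 2) ∂μ
      ≤ ENNReal.ofReal ((R ^ 2 + 2 * R * C + 2 * C ^ 2) * Real.exp (-R / C + 1)) := by
  have hR0 : 0 < R := lt_of_lt_of_le hC hR
  set E : ℝ := Real.exp (-R / C + 1) with hE
  have hEnn : 0 ≤ E := Real.exp_nonneg _
  have htail' : ∀ z : ℝ, C ≤ z → μ {x | z ≤ ‖x‖} ≤ ENNReal.ofReal (Real.exp (-z / C + 1)) := by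
    intro z hz
    rw [← ENNReal.ofReal_toReal (measure_ne_top μ _)]
    exact ENNReal.ofReal_le_ofReal (htail z hz)
  set A : Set α := {x | R ≤ ‖x‖} with hA
  have key := lintegral_rpow_eq_lintegral_meas_le_mul (μ.restrict A)
    (f := fun x => ‖x‖) (Eventually.of_forall fun x => norm_nonneg x)
    measurable_norm.aemeasurable (p := 2) two_pos
  have lhs_eq : ∫⁻ x in A, ENNReal.ofReal (‖x‖ ^ 2) ∂μ
      = ∫⁻ x, ENNReal.ofReal (‖x‖ ^ (2:ℝ)) ∂(μ.restrict A) := by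
    congr 1; funext x
    rw [show (‖x‖ : ℝ) ^ (2:ℝ) = ‖x‖ ^ (2:ℕ) by rw [← Real.rpow_natCast]; norm_num]
  rw [lhs_eq, key]
  have hsplit : (Ioi (0:ℝ)) = Ioc 0 R ∪ Ioi R := (Ioc_union_Ioi_eq_Ioi hR0.le).symm
  have hmble : ∀ t : ℝ, MeasurableSet {a : α | t ≤ ‖a‖} := by
    intro t
    exact measurableSet_le measurable_const measurable_norm
  set m : ℝ → ENNReal := fun t => (μ.restrict A) {a : α | t ≤ ‖a‖} with hm
  have hsplit2 : ∫⁻ t in Ioi (0:ℝ), m t * ENNReal.ofReal (t ^ ((2:ℝ) - 1))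
      = (∫⁻ t in Ioc (0:ℝ) R, m t * ENNReal.ofReal (t ^ ((2:ℝ) - 1)))
        + ∫⁻ t in Ioi R, m t * ENNReal.ofReal (t ^ ((2:ℝ) - 1)) := by
    rw [hsplit, lintegral_union measurableSet_Ioi (Ioc_disjoint_Ioi le_rfl)]
  rw [hsplit2]
  have hpow : ∀ t : ℝ, (t : ℝ) ^ ((2:ℝ) - 1) = t := by intro t; norm_num
  have piece1 : ∫⁻ t in Ioc (0:ℝ) R, m t * ENNReal.ofReal (t ^ ((2:ℝ) - 1))
      ≤ ENNReal.ofReal (E * (R ^ 2 / 2)) := by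
    have hb : ∀ t : ℝ, t ∈ Ioc (0:ℝ) R →
        m t * ENNReal.ofReal (t ^ ((2:ℝ) - 1)) ≤ ENNReal.ofReal E * ENNReal.ofReal t := by
      intro t ht
      rw [hpow]
      refine mul_le_mul_left ?_ _
      calc m t ≤ (μ.restrict A) univ := measure_mono (subset_univ _)
        _ = μ A := by rw [Measure.restrict_apply_univ]
        _ ≤ ENNReal.ofReal E := htail' R hR
    calc ∫⁻ t in Ioc (0:ℝ) R, m t * ENNReal.ofReal (t ^ ((2:ℝ) - 1))
        ≤ ∫⁻ t in Ioc (0:ℝ) R, ENNReal.ofReal E * ENNReal.ofReal t :=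
          setLIntegral_mono (measurable_const.mul ENNReal.measurable_ofReal) hb
      _ = ENNReal.ofReal E * ∫⁻ t in Ioc (0:ℝ) R, ENNReal.ofReal t := by
          rw [lintegral_const_mul _ ENNReal.measurable_ofReal]
      _ = ENNReal.ofReal E * ENNReal.ofReal (R ^ 2 / 2) := by
          rw [← ofReal_integral_eq_lintegral_ofReal]
          · congr 1
            rw [← intervalIntegral.integral_of_le hR0.le, integral_id]
            norm_num
          · exact (continuous_id.integrableOn_Ioc)
          · filter_upwards [ae_restrict_mem measurableSet_Ioc] with t ht
            exact ht.1.le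
      _ = ENNReal.ofReal (E * (R ^ 2 / 2)) := by
          rw [ENNReal.ofReal_mul hEnn]
  have piece2 : ∫⁻ t in Ioi R, m t * ENNReal.ofReal (t ^ ((2:ℝ) - 1))
      ≤ ENNReal.ofReal (C * (R + C) * E) := by
    have hb : ∀ t : ℝ, t ∈ Ioi R →
        m t * ENNReal.ofReal (t ^ ((2:ℝ) - 1)) ≤ ENNReal.ofReal (t * Real.exp (1 - t / C)) := by
      intro t ht
      rw [hpow]
      have h1 : m t ≤ ENNReal.ofReal (Real.exp (-t / C + 1)) := by
        refine le_trans ?_ (htail' t (le_trans hR (le_of_lt ht)))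
        exact Measure.restrict_le_self _
      calc m t * ENNReal.ofReal t ≤ ENNReal.ofReal (Real.exp (-t / C + 1)) * ENNReal.ofReal t :=
            mul_le_mul_left h1 _
        _ = ENNReal.ofReal (t * Real.exp (1 - t / C)) := by
            rw [← ENNReal.ofReal_mul (Real.exp_nonneg _)]
            congr 1
            rw [mul_comm]
            congr 1
            ring
    calc ∫⁻ t in Ioi R, m t * ENNReal.ofReal (t ^ ((2:ℝ) - 1))
        ≤ ∫⁻ t in Ioi R, ENNReal.ofReal (t * Real.exp (1 - t / C)) :=
          setLIntegral_mono ((continuous_id.mul (Real.continuous_exp.comp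
            (continuous_const.sub (continuous_id.div_const C)))).measurable.ennreal_ofReal) hb
      _ = ENNReal.ofReal (∫ t in Ioi R, t * Real.exp (1 - t / C)) := by
          rw [← ofReal_integral_eq_lintegral_ofReal (aux_texp_integrable C R hC hR0)]
          filter_upwards [ae_restrict_mem measurableSet_Ioi] with t ht
          have h0 : (0:ℝ) < t := lt_trans hR0 ht
          positivity
      _ = ENNReal.ofReal (C * (R + C) * E) := by
          rw [aux_texp_integral C R hC hR0]
          congr 2
          rw [hE]
          congr 1
          ring
  calc ENNReal.ofReal (2:ℝ) * ((∫⁻ t in Ioc (0:ℝ) R, m t * ENNReal.ofReal (t ^ ((2:ℝ) - 1)))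
          + ∫⁻ t in Ioi R, m t * ENNReal.ofReal (t ^ ((2:ℝ) - 1)))
      ≤ ENNReal.ofReal (2:ℝ) * (ENNReal.ofReal (E * (R ^ 2 / 2)) + ENNReal.ofReal (C * (R + C) * E)) :=
        mul_le_mul_right (add_le_add piece1 piece2) _
    _ = ENNReal.ofReal ((R ^ 2 + 2 * R * C + 2 * C ^ 2) * E) := by
        rw [← ENNReal.ofReal_add (by positivity) (by positivity),
          ← ENNReal.ofReal_mul (by norm_num)]
        congr 1
        ring

lemma aux_prod_fst {α β : Type*} [MeasurableSpace α] [MeasurableSpace β]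
    (μ : Measure α) (ν : Measure β) [SFinite μ] [SFinite ν]
    {s : Set α} {t : Set β} (hs : MeasurableSet s) (ht : MeasurableSet t)
    {h : α → ENNReal} (hh : Measurable h) :
    ∫⁻ p, (s ×ˢ t).indicator (fun p : α × β => h p.1) p ∂(μ.prod ν)
      = (∫⁻ x in s, h x ∂μ) * ν t := by
  have heq : ∀ p : α × β, (s ×ˢ t).indicator (fun p : α × β => h p.1) p
      = (s.indicator h p.1) * (t.indicator 1 p.2) := by
    intro p
    by_cases h1 : p.1 ∈ s <;> by_cases h2 : p.2 ∈ t <;>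
      simp [Set.indicator, Set.mem_prod, h1, h2]
  simp_rw [heq]
  rw [lintegral_prod_mul (hh.indicator hs).aemeasurable
    ((measurable_one.indicator ht)).aemeasurable,
    lintegral_indicator hs, lintegral_indicator ht]
  simp

lemma aux_prod_snd {α β : Type*} [MeasurableSpace α] [MeasurableSpace β]
    (μ : Measure α) (ν : Measure β) [SFinite μ] [SFinite ν]
    {s : Set α} {t : Set β} (hs : MeasurableSet s) (ht : MeasurableSet t)
    {h : β → ENNReal} (hh : Measurable h) :
    ∫⁻ p, (s ×ˢ t).indicator (fun p : α × β => h p.2) p ∂(μ.prod ν)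
      = μ s * ∫⁻ y in t, h y ∂ν := by
  have heq : ∀ p : α × β, (s ×ˢ t).indicator (fun p : α × β => h p.2) p
      = (s.indicator 1 p.1) * (t.indicator h p.2) := by
    intro p
    by_cases h1 : p.1 ∈ s <;> by_cases h2 : p.2 ∈ t <;>
      simp [Set.indicator, Set.mem_prod, h1, h2]
  simp_rw [heq]
  rw [lintegral_prod_mul ((measurable_one.indicator hs)).aemeasurable
    (hh.indicator ht).aemeasurable,
    lintegral_indicator hs, lintegral_indicator ht]
  simp

lemma aux_tv {α : Type*} [MeasurableSpace α] (μ ν : Measure α)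
    [IsProbabilityMeasure μ] [IsProbabilityMeasure ν] {S : Set α} (hS : MeasurableSet S) :
    (μ S).toReal - (ν S).toReal ≤ tvDist μ ν := by
  have hb : BddAbove (Set.range fun T : {T : Set α // MeasurableSet T} =>
      |(μ T.1).toReal - (ν T.1).toReal|) := by
    refine ⟨1, ?_⟩
    rintro x ⟨T, rfl⟩
    have h1 : (μ T.1).toReal ≤ 1 := by
      have := ENNReal.toReal_mono (by simp) (measure_mono (subset_univ T.1) (μ := μ))
      simpa using this
    have h2 : (ν T.1).toReal ≤ 1 := by
      have := ENNReal.toReal_mono (by simp) (measure_mono (subset_univ T.1) (μ := ν))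
      simpa using this
    have h3 : 0 ≤ (μ T.1).toReal := ENNReal.toReal_nonneg
    have h4 : 0 ≤ (ν T.1).toReal := ENNReal.toReal_nonneg
    rw [abs_le]
    constructor <;> linarith
  exact le_trans (le_abs_self _) (le_ciSup hb ⟨S, hS⟩)

lemma aux_tv_nonneg {α : Type*} [MeasurableSpace α] (μ ν : Measure α) : 0 ≤ tvDist μ ν :=
  Real.iSup_nonneg fun _ => abs_nonneg _

lemma aux_decomp {α : Type*} [MeasurableSpace α] (μ ν : Measure α)
    [IsProbabilityMeasure μ] [IsProbabilityMeasure ν] :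
    ∃ (S : Set α) (μ' ν' m : Measure α), MeasurableSet S ∧
      μ' + m = μ ∧ ν' + m = ν ∧ μ' ≤ μ ∧ ν' ≤ ν ∧
      ν' Set.univ = μ' Set.univ ∧ μ' Set.univ = μ S - ν S ∧ ν S ≤ μ S := by
  obtain ⟨S, hSm, hS1, hS2⟩ := hahn_decomposition (μ := μ) (ν := ν)
  have hνμ : ν.restrict S ≤ μ.restrict S := by
    rw [Measure.le_iff]
    intro t ht
    rw [Measure.restrict_apply ht, Measure.restrict_apply ht]
    exact hS1 _ (ht.inter hSm) inter_subset_right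
  have hμν : μ.restrict Sᶜ ≤ ν.restrict Sᶜ := by
    rw [Measure.le_iff]
    intro t ht
    rw [Measure.restrict_apply ht, Measure.restrict_apply ht]
    exact hS2 _ (ht.inter hSm.compl) inter_subset_right
  refine ⟨S, μ.restrict S - ν.restrict S, ν.restrict Sᶜ - μ.restrict Sᶜ,
    ν.restrict S + μ.restrict Sᶜ, hSm, ?_, ?_, ?_, ?_, ?_, ?_, hS1 S hSm subset_rfl⟩
  · rw [← add_assoc, Measure.sub_add_cancel_of_le hνμ, Measure.restrict_add_restrict_compl hSm]
  · rw [add_comm (ν.restrict S), ← add_assoc, Measure.sub_add_cancel_of_le hμν, add_comm,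
      Measure.restrict_add_restrict_compl hSm]
  · exact le_trans Measure.sub_le Measure.restrict_le_self
  · exact le_trans Measure.sub_le Measure.restrict_le_self
  · rw [Measure.sub_apply MeasurableSet.univ hμν, Measure.sub_apply MeasurableSet.univ hνμ,
      Measure.restrict_apply MeasurableSet.univ, Measure.restrict_apply MeasurableSet.univ,
      Measure.restrict_apply MeasurableSet.univ, Measure.restrict_apply MeasurableSet.univ,
      Set.univ_inter, Set.univ_inter]
    have h1 : μ Sᶜ = 1 - μ S := by rw [measure_compl hSm (measure_ne_top μ S), measure_univ]
    have h2 : ν Sᶜ = 1 - ν S := by rw [measure_compl hSm (measure_ne_top ν S), measure_univ]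
    have hμS1 : μ S ≤ 1 := prob_le_one
    rw [h1, h2]
    exact AddLECancellable.tsub_tsub_tsub_cancel_left
      (ENNReal.cancel_of_ne (by simp [ENNReal.sub_ne_top])) hμS1
  · rw [Measure.sub_apply MeasurableSet.univ hνμ, Measure.restrict_apply MeasurableSet.univ,
      Measure.restrict_apply MeasurableSet.univ, Set.univ_inter]

end Aux

theorem stmt2 (d : ℕ) (μ ν : Measure (EuclideanSpace ℝ (Fin d)))
    [IsProbabilityMeasure μ] [IsProbabilityMeasure ν]
    (C : ℝ) (hC : 0 < C)
    (htailμ : ∀ z : ℝ, C ≤ z → (μ {x | z ≤ ‖x‖}).toReal ≤ Real.exp (-z / C + 1))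
    (htailν : ∀ z : ℝ, C ≤ z → (ν {x | z ≤ ‖x‖}).toReal ≤ Real.exp (-z / C + 1))
    (R : ℝ) (hR : C ≤ R) :
    W2sq μ ν ≤ 4 * R ^ 2 * tvDist μ ν
      + 8 * (R ^ 2 + R * C + C ^ 2) * Real.exp (-R / C + 1) := by
  classical
  have hR0 : 0 < R := lt_of_lt_of_le hC hR
  set Eexp : ℝ := Real.exp (-R / C + 1) with hEexp
  have hEexp0 : 0 ≤ Eexp := Real.exp_nonneg _
  have htv0 : 0 ≤ tvDist μ ν := aux_tv_nonneg μ ν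
  have hRHS0 : 0 ≤ 4 * R ^ 2 * tvDist μ ν + 8 * (R ^ 2 + R * C + C ^ 2) * Eexp := by
    have h1 : 0 ≤ 4 * R ^ 2 * tvDist μ ν := by positivity
    have h2 : 0 ≤ 8 * (R ^ 2 + R * C + C ^ 2) * Eexp := by positivity
    linarith
  have hbdd : BddBelow {c : ℝ | ∃ γ : Measure (EuclideanSpace ℝ (Fin d) ×
      EuclideanSpace ℝ (Fin d)), γ.map Prod.fst = μ ∧ γ.map Prod.snd = ν ∧
      c = ∫ p, ‖p.1 - p.2‖ ^ 2 ∂γ} := by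
    refine ⟨0, ?_⟩
    rintro c ⟨γ, -, -, rfl⟩
    exact integral_nonneg fun p => by positivity
  have hfc : Continuous fun p : EuclideanSpace ℝ (Fin d) × EuclideanSpace ℝ (Fin d) =>
      ‖p.1 - p.2‖ ^ 2 := ((continuous_fst.sub continuous_snd).norm).pow 2
  have hdiag : Measurable fun x : EuclideanSpace ℝ (Fin d) => (x, x) :=
    measurable_id.prodMk measurable_id
  obtain ⟨S, μ', ν', m, hSm, hdecμ, hdecν, hμ'le, hν'le, haν, haμS, hνSle⟩ := aux_decomp μ ν
  haveI : IsFiniteMeasure μ' := isFiniteMeasure_of_le μ hμ'le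
  haveI : IsFiniteMeasure ν' := isFiniteMeasure_of_le ν hν'le
  set a : ENNReal := μ' Set.univ with ha
  have hafin : a ≠ ⊤ := measure_ne_top μ' _
  have hatv : a ≤ ENNReal.ofReal (tvDist μ ν) := by
    conv_lhs => rw [← ENNReal.ofReal_toReal hafin]
    apply ENNReal.ofReal_le_ofReal
    have h1 : a.toReal = (μ S).toReal - (ν S).toReal := by
      rw [haμS, ENNReal.toReal_sub_of_le hνSle (measure_ne_top μ S)]
    rw [h1]
    exact aux_tv μ ν hSm
  unfold W2sq
  by_cases haz : a = 0
  · -- degenerate case: μ = ν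
    have hμ'0 : μ' = 0 := Measure.measure_univ_eq_zero.1 haz
    have hν'0 : ν' = 0 := Measure.measure_univ_eq_zero.1 (haν.trans haz)
    have hμm : μ = m := by rw [← hdecμ, hμ'0, zero_add]
    have hμν2 : ν = μ := by rw [hμm, ← hdecν, hν'0, zero_add]
    have hmem : (0:ℝ) ∈ {c : ℝ | ∃ γ : Measure (EuclideanSpace ℝ (Fin d) ×
        EuclideanSpace ℝ (Fin d)), γ.map Prod.fst = μ ∧ γ.map Prod.snd = ν ∧
        c = ∫ p, ‖p.1 - p.2‖ ^ 2 ∂γ} := by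
      refine ⟨μ.map (fun x => (x, x)), ?_, ?_, ?_⟩
      · rw [Measure.map_map measurable_fst hdiag]
        exact Measure.map_id
      · rw [Measure.map_map measurable_snd hdiag, hμν2]
        exact Measure.map_id
      · rw [integral_map hdiag.aemeasurable hfc.aestronglyMeasurable]
        simp
    exact le_trans (csInf_le hbdd hmem) hRHS0
  · -- main case
    set γ : Measure (EuclideanSpace ℝ (Fin d) × EuclideanSpace ℝ (Fin d)) :=
      m.map (fun x => (x, x)) + a⁻¹ • (μ'.prod ν') with hγ
    have hcomp_fst : (Prod.fst ∘ fun x : EuclideanSpace ℝ (Fin d) => (x, x)) = id := rfl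
    have hcomp_snd : (Prod.snd ∘ fun x : EuclideanSpace ℝ (Fin d) => (x, x)) = id := rfl
    have hfst : γ.map Prod.fst = μ := by
      rw [hγ, Measure.map_add _ _ measurable_fst, Measure.map_smul,
        Measure.map_map measurable_fst hdiag, hcomp_fst, Measure.map_id,
        Measure.map_fst_prod, haν, smul_smul, ENNReal.inv_mul_cancel haz hafin,
        one_smul, add_comm]
      exact hdecμ
    have hsnd : γ.map Prod.snd = ν := by
      rw [hγ, Measure.map_add _ _ measurable_snd, Measure.map_smul,
        Measure.map_map measurable_snd hdiag, hcomp_snd, Measure.map_id,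
        Measure.map_snd_prod, ← ha, smul_smul, ENNReal.inv_mul_cancel haz hafin,
        one_smul, add_comm]
      exact hdecν
    set f : EuclideanSpace ℝ (Fin d) × EuclideanSpace ℝ (Fin d) → ENNReal :=
      fun p => ENNReal.ofReal (‖p.1 - p.2‖ ^ 2) with hf
    have hfm : Measurable f := hfc.measurable.ennreal_ofReal
    have hcost : ∫ p, ‖p.1 - p.2‖ ^ 2 ∂γ = (∫⁻ p, f p ∂γ).toReal := by
      rw [integral_eq_lintegral_of_nonneg_ae (Filter.Eventually.of_forall fun p => by positivity)
        hfc.aestronglyMeasurable]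
    set A : Set (EuclideanSpace ℝ (Fin d)) := {x | R ≤ ‖x‖} with hA
    have hAm : MeasurableSet A := measurableSet_le measurable_const measurable_norm
    set Eofr : ENNReal := ENNReal.ofReal Eexp with hEofr
    have hAμ : μ A ≤ Eofr := by
      rw [← ENNReal.ofReal_toReal (measure_ne_top μ A)]
      exact ENNReal.ofReal_le_ofReal (htailμ R hR)
    have hAν : ν A ≤ Eofr := by
      rw [← ENNReal.ofReal_toReal (measure_ne_top ν A)]
      exact ENNReal.ofReal_le_ofReal (htailν R hR)
    have hAμ' : μ' A ≤ Eofr := le_trans (hμ'le A) hAμ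
    have hAν' : ν' A ≤ Eofr := le_trans (hν'le A) hAν
    set T : ENNReal := ENNReal.ofReal ((R ^ 2 + 2 * R * C + 2 * C ^ 2) * Eexp) with hT
    have hTμ : ∫⁻ x in A, ENNReal.ofReal (‖x‖ ^ 2) ∂μ' ≤ T :=
      le_trans (lintegral_mono' (Measure.restrict_mono subset_rfl hμ'le) le_rfl)
        (aux_tail_moment μ C R hC hR htailμ)
    have hTν : ∫⁻ x in A, ENNReal.ofReal (‖x‖ ^ 2) ∂ν' ≤ T :=
      le_trans (lintegral_mono' (Measure.restrict_mono subset_rfl hν'le) le_rfl)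
        (aux_tail_moment ν C R hC hR htailν)
    have hnorm2m : Measurable fun x : EuclideanSpace ℝ (Fin d) =>
        ENNReal.ofReal (2 * ‖x‖ ^ 2) :=
      ((continuous_const.mul ((continuous_norm).pow 2)).measurable).ennreal_ofReal
    -- the five majorant pieces
    set g1 : EuclideanSpace ℝ (Fin d) × EuclideanSpace ℝ (Fin d) → ENNReal :=
      (A ×ˢ Set.univ).indicator (fun p => ENNReal.ofReal (2 * ‖p.1‖ ^ 2)) with hg1
    set g2 : EuclideanSpace ℝ (Fin d) × EuclideanSpace ℝ (Fin d) → ENNReal :=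
      (Aᶜ ×ˢ A).indicator (fun p => ENNReal.ofReal (2 * ‖p.1‖ ^ 2)) with hg2
    set g3 : EuclideanSpace ℝ (Fin d) × EuclideanSpace ℝ (Fin d) → ENNReal :=
      (Set.univ ×ˢ A).indicator (fun p => ENNReal.ofReal (2 * ‖p.2‖ ^ 2)) with hg3
    set g4 : EuclideanSpace ℝ (Fin d) × EuclideanSpace ℝ (Fin d) → ENNReal :=
      (A ×ˢ Aᶜ).indicator (fun p => ENNReal.ofReal (2 * ‖p.2‖ ^ 2)) with hg4
    have hkey : ∀ p : EuclideanSpace ℝ (Fin d) × EuclideanSpace ℝ (Fin d),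
        ENNReal.ofReal (‖p.1 - p.2‖ ^ 2)
          ≤ ENNReal.ofReal (4 * R ^ 2) + ENNReal.ofReal (2 * ‖p.1‖ ^ 2)
            + ENNReal.ofReal (2 * ‖p.2‖ ^ 2) := by
      intro p
      rw [← ENNReal.ofReal_add (by positivity) (by positivity),
        ← ENNReal.ofReal_add (by positivity) (by positivity)]
      apply ENNReal.ofReal_le_ofReal
      nlinarith [norm_sub_le p.1 p.2, norm_nonneg (p.1 - p.2), norm_nonneg p.1, norm_nonneg p.2,
        sq_nonneg R, sq_nonneg (‖p.1‖ - ‖p.2‖)]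
    have hpt : ∀ p, f p ≤ (fun _ => ENNReal.ofReal (4 * R ^ 2)) p + g1 p + g2 p + g3 p + g4 p := by
      intro p
      by_cases hx : R ≤ ‖p.1‖ <;> by_cases hy : R ≤ ‖p.2‖
      · have e1 : g1 p = ENNReal.ofReal (2 * ‖p.1‖ ^ 2) := by
          rw [hg1, Set.indicator_of_mem (by exact ⟨hx, Set.mem_univ _⟩)]
        have e3 : g3 p = ENNReal.ofReal (2 * ‖p.2‖ ^ 2) := by
          rw [hg3, Set.indicator_of_mem (by exact ⟨Set.mem_univ _, hy⟩)]
        calc f p ≤ ENNReal.ofReal (4 * R ^ 2) + ENNReal.ofReal (2 * ‖p.1‖ ^ 2)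
              + ENNReal.ofReal (2 * ‖p.2‖ ^ 2) := hkey p
          _ = ENNReal.ofReal (4 * R ^ 2) + ENNReal.ofReal (2 * ‖p.1‖ ^ 2) + 0
              + ENNReal.ofReal (2 * ‖p.2‖ ^ 2) + 0 := by ring
          _ ≤ _ := by rw [e1, e3]; gcongr <;> exact zero_le
      · have e1 : g1 p = ENNReal.ofReal (2 * ‖p.1‖ ^ 2) := by
          rw [hg1, Set.indicator_of_mem (by exact ⟨hx, Set.mem_univ _⟩)]
        have e4 : g4 p = ENNReal.ofReal (2 * ‖p.2‖ ^ 2) := by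
          rw [hg4, Set.indicator_of_mem (by exact ⟨hx, hy⟩)]
        calc f p ≤ ENNReal.ofReal (4 * R ^ 2) + ENNReal.ofReal (2 * ‖p.1‖ ^ 2)
              + ENNReal.ofReal (2 * ‖p.2‖ ^ 2) := hkey p
          _ = ENNReal.ofReal (4 * R ^ 2) + ENNReal.ofReal (2 * ‖p.1‖ ^ 2) + 0 + 0
              + ENNReal.ofReal (2 * ‖p.2‖ ^ 2) := by ring
          _ ≤ _ := by rw [e1, e4]; gcongr <;> exact zero_le
      · have e2 : g2 p = ENNReal.ofReal (2 * ‖p.1‖ ^ 2) := by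
          rw [hg2, Set.indicator_of_mem (by exact ⟨hx, hy⟩)]
        have e3 : g3 p = ENNReal.ofReal (2 * ‖p.2‖ ^ 2) := by
          rw [hg3, Set.indicator_of_mem (by exact ⟨Set.mem_univ _, hy⟩)]
        calc f p ≤ ENNReal.ofReal (4 * R ^ 2) + ENNReal.ofReal (2 * ‖p.1‖ ^ 2)
              + ENNReal.ofReal (2 * ‖p.2‖ ^ 2) := hkey p
          _ = ENNReal.ofReal (4 * R ^ 2) + 0 + ENNReal.ofReal (2 * ‖p.1‖ ^ 2)
              + ENNReal.ofReal (2 * ‖p.2‖ ^ 2) + 0 := by ring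
          _ ≤ _ := by rw [e2, e3]; gcongr <;> exact zero_le
      · have hxy : ‖p.1 - p.2‖ ^ 2 ≤ 4 * R ^ 2 := by
          push_neg at hx hy
          nlinarith [norm_sub_le p.1 p.2, norm_nonneg (p.1 - p.2), norm_nonneg p.1,
            norm_nonneg p.2]
        calc f p ≤ ENNReal.ofReal (4 * R ^ 2) := ENNReal.ofReal_le_ofReal hxy
          _ = ENNReal.ofReal (4 * R ^ 2) + 0 + 0 + 0 + 0 := by ring
          _ ≤ _ := by gcongr <;> exact zero_le
    have hmg1 : Measurable g1 :=
      (hnorm2m.comp measurable_fst).indicator (hAm.prod MeasurableSet.univ)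
    have hmg2 : Measurable g2 :=
      (hnorm2m.comp measurable_fst).indicator (hAm.compl.prod hAm)
    have hmg3 : Measurable g3 :=
      (hnorm2m.comp measurable_snd).indicator (MeasurableSet.univ.prod hAm)
    have hmg4 : Measurable g4 :=
      (hnorm2m.comp measurable_snd).indicator (hAm.prod hAm.compl)
    have hprodU : (μ'.prod ν') Set.univ = a * a := by
      rw [← Set.univ_prod_univ, Measure.prod_prod, haν, ← ha]
    set W : ENNReal := ENNReal.ofReal (4 * R ^ 2) * ENNReal.ofReal (tvDist μ ν)
      + ENNReal.ofReal 2 * T + ENNReal.ofReal (2 * R ^ 2) * Eofr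
      + ENNReal.ofReal 2 * T + ENNReal.ofReal (2 * R ^ 2) * Eofr with hW
    have hsqm : Measurable fun x : EuclideanSpace ℝ (Fin d) => ENNReal.ofReal (‖x‖ ^ 2) :=
      ((continuous_norm.pow 2).measurable).ennreal_ofReal
    have hofr2 : ∀ x : EuclideanSpace ℝ (Fin d), ENNReal.ofReal (2 * ‖x‖ ^ 2)
        = ENNReal.ofReal 2 * ENNReal.ofReal (‖x‖ ^ 2) := fun x =>
      ENNReal.ofReal_mul (by norm_num)
    have hAμ'2 : ∫⁻ x in A, ENNReal.ofReal (2 * ‖x‖ ^ 2) ∂μ' ≤ ENNReal.ofReal 2 * T := by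
      simp_rw [hofr2]
      rw [lintegral_const_mul _ hsqm]
      exact mul_le_mul_right hTμ _
    have hAν'2 : ∫⁻ y in A, ENNReal.ofReal (2 * ‖y‖ ^ 2) ∂ν' ≤ ENNReal.ofReal 2 * T := by
      simp_rw [hofr2]
      rw [lintegral_const_mul _ hsqm]
      exact mul_le_mul_right hTν _
    have hAcμ' : ∫⁻ x in Aᶜ, ENNReal.ofReal (2 * ‖x‖ ^ 2) ∂μ'
        ≤ ENNReal.ofReal (2 * R ^ 2) * a := by
      calc ∫⁻ x in Aᶜ, ENNReal.ofReal (2 * ‖x‖ ^ 2) ∂μ'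
          ≤ ∫⁻ _x in Aᶜ, ENNReal.ofReal (2 * R ^ 2) ∂μ' := by
            refine setLIntegral_mono measurable_const fun x hx => ?_
            apply ENNReal.ofReal_le_ofReal
            simp only [hA, Set.mem_compl_iff, Set.mem_setOf_eq, not_le] at hx
            nlinarith [norm_nonneg x]
        _ = ENNReal.ofReal (2 * R ^ 2) * μ' Aᶜ := by rw [setLIntegral_const]
        _ ≤ ENNReal.ofReal (2 * R ^ 2) * a := by
            rw [ha]
            exact mul_le_mul_right (measure_mono (Set.subset_univ _)) _
    have hAcν' : ∫⁻ y in Aᶜ, ENNReal.ofReal (2 * ‖y‖ ^ 2) ∂ν'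
        ≤ ENNReal.ofReal (2 * R ^ 2) * a := by
      calc ∫⁻ y in Aᶜ, ENNReal.ofReal (2 * ‖y‖ ^ 2) ∂ν'
          ≤ ∫⁻ _y in Aᶜ, ENNReal.ofReal (2 * R ^ 2) ∂ν' := by
            refine setLIntegral_mono measurable_const fun y hy => ?_
            apply ENNReal.ofReal_le_ofReal
            simp only [hA, Set.mem_compl_iff, Set.mem_setOf_eq, not_le] at hy
            nlinarith [norm_nonneg y]
        _ = ENNReal.ofReal (2 * R ^ 2) * ν' Aᶜ := by rw [setLIntegral_const]
        _ ≤ ENNReal.ofReal (2 * R ^ 2) * a :=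
            mul_le_mul_right ((measure_mono (Set.subset_univ _)).trans (le_of_eq haν)) _
    have hP : ∫⁻ p, f p ∂(μ'.prod ν') ≤ a * W := by
      have hsum : ∫⁻ p, f p ∂(μ'.prod ν')
          ≤ ENNReal.ofReal (4 * R ^ 2) * (a * a)
            + (∫⁻ x in A, ENNReal.ofReal (2 * ‖x‖ ^ 2) ∂μ') * ν' Set.univ
            + (∫⁻ x in Aᶜ, ENNReal.ofReal (2 * ‖x‖ ^ 2) ∂μ') * ν' A
            + a * (∫⁻ y in A, ENNReal.ofReal (2 * ‖y‖ ^ 2) ∂ν')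
            + μ' A * (∫⁻ y in Aᶜ, ENNReal.ofReal (2 * ‖y‖ ^ 2) ∂ν') := by
        calc ∫⁻ p, f p ∂(μ'.prod ν')
            ≤ ∫⁻ p, ((fun _ => ENNReal.ofReal (4 * R ^ 2)) p + g1 p + g2 p + g3 p + g4 p)
              ∂(μ'.prod ν') := lintegral_mono hpt
          _ = ENNReal.ofReal (4 * R ^ 2) * (a * a)
              + (∫⁻ x in A, ENNReal.ofReal (2 * ‖x‖ ^ 2) ∂μ') * ν' Set.univ
              + (∫⁻ x in Aᶜ, ENNReal.ofReal (2 * ‖x‖ ^ 2) ∂μ') * ν' A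
              + a * (∫⁻ y in A, ENNReal.ofReal (2 * ‖y‖ ^ 2) ∂ν')
              + μ' A * (∫⁻ y in Aᶜ, ENNReal.ofReal (2 * ‖y‖ ^ 2) ∂ν') := by
            rw [lintegral_add_right _ hmg4, lintegral_add_right _ hmg3,
              lintegral_add_right _ hmg2, lintegral_add_right _ hmg1, lintegral_const,
              hprodU, hg1, hg2, hg3, hg4,
              aux_prod_fst μ' ν' hAm MeasurableSet.univ hnorm2m,
              aux_prod_fst μ' ν' hAm.compl hAm hnorm2m,
              aux_prod_snd μ' ν' MeasurableSet.univ hAm hnorm2m,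
              aux_prod_snd μ' ν' hAm hAm.compl hnorm2m, ha]
      refine le_trans hsum ?_
      have step : ENNReal.ofReal (4 * R ^ 2) * (a * a)
            + (∫⁻ x in A, ENNReal.ofReal (2 * ‖x‖ ^ 2) ∂μ') * ν' Set.univ
            + (∫⁻ x in Aᶜ, ENNReal.ofReal (2 * ‖x‖ ^ 2) ∂μ') * ν' A
            + a * (∫⁻ y in A, ENNReal.ofReal (2 * ‖y‖ ^ 2) ∂ν')
            + μ' A * (∫⁻ y in Aᶜ, ENNReal.ofReal (2 * ‖y‖ ^ 2) ∂ν')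
          ≤ ENNReal.ofReal (4 * R ^ 2) * (ENNReal.ofReal (tvDist μ ν) * a)
            + (ENNReal.ofReal 2 * T) * a
            + (ENNReal.ofReal (2 * R ^ 2) * a) * Eofr
            + a * (ENNReal.ofReal 2 * T)
            + Eofr * (ENNReal.ofReal (2 * R ^ 2) * a) := by
        rw [haν]
        gcongr
      refine le_trans step (le_of_eq ?_)
      rw [hW]
      ring
    have hL : ∫⁻ p, f p ∂γ ≤ W := by
      rw [hγ, lintegral_add_measure, lintegral_smul_measure, lintegral_map hfm hdiag]
      have h0 : ∫⁻ x, f (x, x) ∂m = 0 := by simp [hf]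
      rw [h0, zero_add]
      calc a⁻¹ * ∫⁻ p, f p ∂(μ'.prod ν') ≤ a⁻¹ * (a * W) := mul_le_mul_right hP _
        _ = (a⁻¹ * a) * W := (mul_assoc _ _ _).symm
        _ = W := by rw [ENNReal.inv_mul_cancel haz hafin, one_mul]
    have hc1 : (0:ℝ) ≤ 4 * R ^ 2 * tvDist μ ν := mul_nonneg (by positivity) htv0
    have hWle : W ≤ ENNReal.ofReal
        (4 * R ^ 2 * tvDist μ ν + 8 * (R ^ 2 + R * C + C ^ 2) * Eexp) := by
      rw [hW, hT, hEofr,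
        ← ENNReal.ofReal_mul (show (0:ℝ) ≤ 4 * R ^ 2 by positivity),
        ← ENNReal.ofReal_mul (show (0:ℝ) ≤ 2 by norm_num),
        ← ENNReal.ofReal_mul (show (0:ℝ) ≤ 2 * R ^ 2 by positivity),
        ← ENNReal.ofReal_add hc1 (by positivity),
        ← ENNReal.ofReal_add (by positivity) (by positivity),
        ← ENNReal.ofReal_add (by positivity) (by positivity),
        ← ENNReal.ofReal_add (by positivity) (by positivity)]
      exact ENNReal.ofReal_le_ofReal (le_of_eq (by ring))
    have hmem : (∫ p, ‖p.1 - p.2‖ ^ 2 ∂γ) ∈ {c : ℝ | ∃ γ : Measure (EuclideanSpace ℝ (Fin d) ×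
        EuclideanSpace ℝ (Fin d)), γ.map Prod.fst = μ ∧ γ.map Prod.snd = ν ∧
        c = ∫ p, ‖p.1 - p.2‖ ^ 2 ∂γ} := ⟨γ, hfst, hsnd, rfl⟩
    refine le_trans (csInf_le hbdd hmem) ?_
    rw [hcost]
    exact ENNReal.toReal_le_of_le_ofReal hRHS0 (le_trans hL hWle)
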